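/- In the permutation wreath product W = Sym(A) ⋉ B with length function ℓ̂_K^A, the subadditivity inequality ℓ̂_K^A((α₁α₂, b₁^{α₂}b₂)) ≤ ℓ̂_K^A((α₁,b₁)) + ℓ̂_K^A((α₂,b₂)) holds for all α₁, α₂ ∈ Sym(A) and b₁, b₂ ∈ B. -/

import Mathlib

/-- An invariant length function on a group, valued in `[0,1]`. -/
def IsInvLength {K : Type*} [Group K] (ℓ : K → ℝ) : Prop :=
  (∀ x, 0 ≤ ℓ x) ∧ (∀ x, ℓ x ≤ 1) ∧ (∀ x, ℓ x = 0 ↔ x = 1) ∧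
  (∀ x, ℓ x⁻¹ = ℓ x) ∧ (∀ x y, ℓ (x * y) ≤ ℓ x + ℓ y) ∧
  (∀ x y, ℓ (x * y * x⁻¹) = ℓ y)

/-- The length `ℓ̂_K^A (α, b)` for the permutation wreath product. -/
noncomputable def permWrLen {K A : Type*} [Group K] [Fintype A] [DecidableEq A]
    (ℓK : K → ℝ) (α : Equiv.Perm A) (b : A → K) : ℝ :=
  (1 / (Fintype.card A : ℝ)) * ∑ a : A, if α a = a then ℓK (b a) else 1

theorem stmt_9 {K A : Type*} [Group K] [Fintype A] [DecidableEq A] [Nonempty A]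
    (ℓK : K → ℝ) (hK : IsInvLength ℓK)
    (α₁ α₂ : Equiv.Perm A) (b₁ b₂ : A → K) :
    permWrLen ℓK (α₁ * α₂) ((fun a => b₁ (α₂⁻¹ a)) * b₂) ≤
      permWrLen ℓK α₁ b₁ + permWrLen ℓK α₂ b₂ := by
  obtain ⟨h0, h1, -, -, hsub, -⟩ := hK
  unfold permWrLen
  rw [← mul_add, ← Finset.sum_add_distrib]
  apply mul_le_mul_of_nonneg_left _ (by positivity)
  apply Finset.sum_le_sum
  intro a _
  simp only [Pi.mul_apply]
  rw [Equiv.Perm.mul_apply]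
  by_cases h2 : α₂ a = a
  · have h2' : α₂⁻¹ a = a := by nth_rewrite 1 [← h2]; simp
    rw [h2, h2', if_pos rfl]
    split_ifs with hf
    · exact hsub _ _
    · linarith [h0 (b₂ a)]
  · rw [if_neg h2]
    split_ifs with hf hg
    · linarith [h1 (b₁ (α₂⁻¹ a) * b₂ a), h0 (b₁ a)]
    · linarith [h1 (b₁ (α₂⁻¹ a) * b₂ a)]
    · linarith [h0 (b₁ a)]
    · linarith
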